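/- Let f be a defective probability generating function with smallest fixed point q in (0,1) and gamma = f'(q) > 0. Then for all integers i >= 1 and j >= 1, the ratio (f(k-1,1)^j - f(k-1,0)^j) / (f(k,1)^i - f(k,0)^i) converges, as k tends to infinity, to j * q^{j-i} / (gamma * i). Consequently, the transformed transition probabilities Q_{ij}^{(k)} = P_{ij} * (f(k-1,1)^j - f(k-1,0)^j)/(f(k,1)^i - f(k,0)^i), where P_{ij} is the coefficient of s^j in f(s)^i, converge to P_{ij} * j * q^{j-i}/(gamma * i) as k tends to infinity (the Q-process transition probabilities). -/

import Mathlib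

open Filter Finset

/-- For a defective pgf `f` with smallest fixed point `q ∈ (0,1)` and `γ = f'(q) > 0`,
for all `i, j ≥ 1`,
`(f^[k-1] 1 ^ j - f^[k-1] 0 ^ j) / (f^[k] 1 ^ i - f^[k] 0 ^ i) → j q^{j-i} / (γ i)`,
and consequently the transformed transition probabilities
`Q_{ij}^{(k)} = P_{ij} (f^[k-1] 1 ^ j - f^[k-1] 0 ^ j)/(f^[k] 1 ^ i - f^[k] 0 ^ i)`
converge to the Q-process transition probabilities `P_{ij} j q^{j-i}/(γ i)`,
where `P i j` is the coefficient of `s^j` in `f(s)^i`. -/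
theorem stmt_5
    (p : ℕ → ℝ) (ε : ℝ) (f : ℝ → ℝ) (q γ : ℝ)
    (hp : ∀ k, 0 ≤ p k) (hε : ε ∈ Set.Ioo (0 : ℝ) 1)
    (hsum : HasSum p (1 - ε))
    (hf : ∀ s : ℝ, f s = ∑' k, p k * s ^ k)
    (hq : q ∈ Set.Ioo (0 : ℝ) 1) (hfix : f q = q)
    (hqmin : ∀ x ∈ Set.Icc (0 : ℝ) 1, f x = x → q ≤ x)
    (hγ : γ = deriv f q) (hγpos : 0 < γ)
    (P : ℕ → ℕ → ℝ) (hPnonneg : ∀ i j, 0 ≤ P i j)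
    (hP : ∀ i : ℕ, ∀ s ∈ Set.Icc (0 : ℝ) 1, f s ^ i = ∑' j, P i j * s ^ j)
    (i j : ℕ) (hi : 1 ≤ i) (hj : 1 ≤ j) :
    Tendsto
      (fun k : ℕ =>
        (f^[k - 1] 1 ^ j - f^[k - 1] 0 ^ j) / (f^[k] 1 ^ i - f^[k] 0 ^ i))
      atTop (nhds ((j : ℝ) * q ^ ((j : ℤ) - (i : ℤ)) / (γ * i))) ∧
    Tendsto
      (fun k : ℕ =>
        P i j *
          ((f^[k - 1] 1 ^ j - f^[k - 1] 0 ^ j) / (f^[k] 1 ^ i - f^[k] 0 ^ i)))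
      atTop (nhds (P i j * ((j : ℝ) * q ^ ((j : ℤ) - (i : ℤ)) / (γ * i)))) := by
  obtain ⟨hε0, hε1⟩ := hε
  obtain ⟨hq0, hq1⟩ := hq
  have hpsum : Summable p := hsum.summable
  have hple : ∀ k, p k ≤ 1 := fun k => by
    have := le_hasSum hsum k fun m _ => hp m; linarith
  -- summability of the pgf series on [0,1]
  have hsumf : ∀ x : ℝ, 0 ≤ x → x ≤ 1 → Summable (fun k => p k * x ^ k) := by
    intro x hx0 hx1
    refine Summable.of_nonneg_of_le (fun k => mul_nonneg (hp k) (pow_nonneg hx0 k))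
      (fun k => mul_le_of_le_one_right (hp k) (pow_le_one₀ hx0 hx1)) hpsum
  -- radius r
  set r : ℝ := (1 + max q (1 - ε)) / 2 with hrdef
  have hqr : q < r := by
    have h1 : q ≤ max q (1 - ε) := le_max_left _ _
    have h2 : max q (1 - ε) < 1 := max_lt hq1 (by linarith)
    simp only [hrdef]; nlinarith [le_max_left q (1-ε)]
  have hεr : 1 - ε < r := by
    have h2 : max q (1 - ε) < 1 := max_lt hq1 (by linarith)
    simp only [hrdef]; nlinarith [le_max_right q (1-ε)]
  have hr1 : r < 1 := by
    have h2 : max q (1 - ε) < 1 := max_lt hq1 (by linarith)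
    simp only [hrdef]; linarith
  have hr0 : 0 < r := lt_trans hq0 hqr
  -- summable bound for derivatives
  set u : ℕ → ℝ := fun k => (k : ℝ) * r ^ (k - 1) with hudef
  have hu : Summable u := by
    rw [hudef, ← summable_nat_add_iff 1]
    have h1 : Summable (fun n : ℕ => (n : ℝ) ^ 1 * r ^ n) :=
      summable_pow_mul_geometric_of_norm_lt_one 1 (by rwa [Real.norm_eq_abs, abs_of_pos hr0])
    have h2 : Summable (fun n : ℕ => r ^ n) := summable_geometric_of_lt_one hr0.le hr1
    convert h1.add h2 using 2 with n
    · rfl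
    · rw [Nat.add_sub_cancel, Nat.cast_add, Nat.cast_one]
      ring
  have hubound : ∀ (k : ℕ) (x : ℝ), |x| ≤ r →
      ‖p k * ((k : ℝ) * x ^ (k - 1))‖ ≤ u k := by
    intro k x hxr
    rw [norm_mul, norm_mul, Real.norm_eq_abs, Real.norm_eq_abs, Real.norm_eq_abs,
      abs_of_nonneg (hp k), abs_of_nonneg (by positivity : (0:ℝ) ≤ (k:ℝ))]
    calc p k * ((k : ℝ) * |x ^ (k-1)|) ≤ 1 * ((k : ℝ) * r ^ (k-1)) := by
          apply mul_le_mul (hple k)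
          · apply mul_le_mul_of_nonneg_left _ (by positivity)
            rw [abs_pow]
            exact pow_le_pow_left₀ (abs_nonneg x) hxr _
          · positivity
          · norm_num
      _ = u k := by rw [one_mul]
  -- derivative function
  set D : ℝ → ℝ := fun x => ∑' k, p k * ((k : ℝ) * x ^ (k - 1)) with hDdef
  have hDx : ∀ x ∈ Set.Ioo (-r) r, HasDerivAt f (D x) x := by
    intro x hx
    have h0 : (0:ℝ) ∈ Set.Ioo (-r) r := by constructor <;> simp [hr0] <;> linarith
    have := hasDerivAt_tsum_of_isPreconnected hu isOpen_Ioo isPreconnected_Ioo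
      (g := fun k y => p k * y ^ k) (g' := fun k y => p k * ((k:ℝ) * y ^ (k-1)))
      (fun k y _ => (hasDerivAt_pow k y).const_mul (p k))
      (fun k y hy => hubound k y (abs_le.mpr ⟨hy.1.le, hy.2.le⟩)) h0 (hsumf 0 le_rfl zero_le_one |>.congr ?_) hx
    · have hfeq : f = fun z => ∑' k, p k * z ^ k := funext hf
      rw [hfeq]; exact this
    · intro k; rfl
  have hγD : γ = D q := by
    rw [hγ, (hDx q ⟨by linarith, hqr⟩).deriv]
  -- continuity of D
  have hDcont : ContinuousAt D q := by
    have : ContinuousOn D (Set.Icc (-r) r) := by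
      refine continuousOn_tsum
        (fun k => (continuous_const.mul (continuous_const.mul (continuous_pow (k-1)))).continuousOn) hu ?_
      intro k x hx
      exact hubound k x (abs_le.mpr ⟨hx.1, hx.2⟩)
    exact this.continuousAt (Icc_mem_nhds (by linarith) hqr)
  -- summability of D terms
  have hsumD : ∀ x : ℝ, 0 ≤ x → x ≤ r → Summable (fun k => p k * ((k:ℝ) * x ^ (k-1))) := by
    intro x hx0 hxr
    refine Summable.of_nonneg_of_le (fun k => mul_nonneg (hp k) (by positivity)) (fun k => ?_) hu
    have := hubound k x (by rwa [abs_of_nonneg hx0])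
    rwa [Real.norm_eq_abs, abs_of_nonneg (mul_nonneg (hp k) (by positivity))] at this
  -- monotonicity of D on [0, r]
  have hDmono : ∀ x y : ℝ, 0 ≤ x → x ≤ y → y ≤ r → D x ≤ D y := by
    intro x y hx0 hxy hyr
    refine Summable.tsum_le_tsum (fun k => ?_) (hsumD x hx0 (hxy.trans hyr)) (hsumD y (hx0.trans hxy) hyr)
    apply mul_le_mul_of_nonneg_left _ (hp k)
    exact mul_le_mul_of_nonneg_left (pow_le_pow_left₀ hx0 hxy _) (by positivity)
  -- monotonicity of f on [0,1]
  have hfmono : ∀ x y : ℝ, 0 ≤ x → x ≤ y → y ≤ 1 → f x ≤ f y := by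
    intro x y hx0 hxy hy1
    rw [hf x, hf y]
    refine Summable.tsum_le_tsum (fun k => ?_) (hsumf x hx0 (hxy.trans hy1)) (hsumf y (hx0.trans hxy) hy1)
    exact mul_le_mul_of_nonneg_left (pow_le_pow_left₀ hx0 hxy _) (hp k)
  have hf1 : f 1 = 1 - ε := by
    rw [hf 1]; simpa using hsum.tsum_eq
  have hf0 : f 0 = p 0 := by
    rw [hf 0, tsum_eq_single 0 (fun k hk => by simp [zero_pow hk])]; simp
  have hfnonneg : ∀ x : ℝ, 0 ≤ x → 0 ≤ f x := by
    intro x hx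
    rw [hf x]
    exact tsum_nonneg fun k => mul_nonneg (hp k) (pow_nonneg hx k)
  -- the iterates
  set b : ℕ → ℝ := fun k => f^[k] 0 with hbdef
  set c : ℕ → ℝ := fun k => f^[k] 1 with hcdef
  have hbsucc : ∀ k, b (k+1) = f (b k) := fun k => Function.iterate_succ_apply' f k 0
  have hcsucc : ∀ k, c (k+1) = f (c k) := fun k => Function.iterate_succ_apply' f k 1
  have hbc : ∀ k, 0 ≤ b k ∧ b k ≤ q ∧ q ≤ c k ∧ c k ≤ 1 := by
    intro k
    induction k with
    | zero => exact ⟨le_rfl, hq0.le, hq1.le, le_rfl⟩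
    | succ n ih =>
      obtain ⟨h1, h2, h3, h4⟩ := ih
      refine ⟨?_, ?_, ?_, ?_⟩
      · rw [hbsucc]; exact hfnonneg _ h1
      · rw [hbsucc, ← hfix]; exact hfmono _ _ h1 h2 hq1.le
      · rw [hcsucc, ← hfix]; exact hfmono _ _ hq0.le h3 h4
      · rw [hcsucc]
        calc f (c n) ≤ f 1 := hfmono _ _ (hq0.le.trans h3) h4 le_rfl
          _ ≤ 1 := by rw [hf1]; linarith
  have hbmono : Monotone b := by
    apply monotone_nat_of_le_succ
    intro k
    induction k with
    | zero => rw [hbsucc]; exact hfnonneg 0 le_rfl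
    | succ n ih =>
      calc b (n+1) = f (b n) := hbsucc n
        _ ≤ f (b (n+1)) := hfmono _ _ (hbc n).1 ih ((hbc (n+1)).2.1.trans hq1.le)
        _ = b (n+2) := (hbsucc (n+1)).symm
  have hcanti : Antitone c := by
    apply antitone_nat_of_succ_le
    intro k
    induction k with
    | zero => rw [hcsucc]; show f 1 ≤ 1; rw [hf1]; linarith
    | succ n ih =>
      calc c (n+2) = f (c (n+1)) := hcsucc (n+1)
        _ ≤ f (c n) := hfmono _ _ (hq0.le.trans (hbc (n+1)).2.2.1) ih (hbc n).2.2.2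
        _ = c (n+1) := (hcsucc n).symm
  have hc1 : c 1 = 1 - ε := by rw [show c 1 = f (c 0) from hcsucc 0]; exact hf1
  -- a positive coefficient with index ≥ 1
  have hpm : ∃ m : ℕ, 1 ≤ m ∧ 0 < p m := by
    by_contra h
    push_neg at h
    have hz : ∀ k : ℕ, p k * ((k:ℝ) * q ^ (k-1)) = 0 := by
      intro k
      match k with
      | 0 => simp
      | n+1 =>
        have : p (n+1) ≤ 0 := h (n+1) (Nat.le_add_left 1 n)
        have : p (n+1) = 0 := le_antisymm this (hp (n+1))
        simp [this]
    have : D q = 0 := by rw [hDdef]; simpa using tsum_congr hz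
    rw [hγD, this] at hγpos; exact lt_irrefl 0 hγpos
  have hfstrict : ∀ x y : ℝ, 0 ≤ x → x < y → y ≤ 1 → f x < f y := by
    intro x y hx0 hxy hy1
    obtain ⟨m, hm1, hm⟩ := hpm
    rw [hf x, hf y]
    refine Summable.tsum_lt_tsum_of_nonneg (i := m) (fun k => mul_nonneg (hp k) (pow_nonneg hx0 k))
      (fun k => mul_le_mul_of_nonneg_left (pow_le_pow_left₀ hx0 hxy.le k) (hp k)) ?_
      (hsumf y (hx0.trans hxy.le) hy1)
    exact mul_lt_mul_of_pos_left (pow_lt_pow_left₀ hxy hx0 (by omega)) hm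
  have hblt : ∀ k, b k < c k := by
    intro k
    induction k with
    | zero => norm_num [hbdef, hcdef]
    | succ n ih =>
      rw [hbsucc, hcsucc]
      exact hfstrict _ _ (hbc n).1 ih (hbc n).2.2.2
  -- f x < x for x > q
  have hfltx : ∀ x : ℝ, q < x → x ≤ 1 → f x < x := by
    intro x hqx hx1
    set t : ℝ := (x - q) / (1 - q) with htdef
    have hq1' : (0:ℝ) < 1 - q := by linarith
    have ht0 : 0 < t := div_pos (by linarith) hq1'
    have ht1 : t ≤ 1 := by rw [div_le_one hq1']; linarith
    have hxeq : (1 - t) * q + t = x := by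
      have ht' : t * (1 - q) = x - q := by rw [htdef]; exact div_mul_cancel₀ _ hq1'.ne'
      linear_combination ht'
    have hterm : ∀ k : ℕ, p k * x ^ k ≤ (1-t) * (p k * q ^ k) + t * p k := by
      intro k
      have hconv := (convexOn_pow (𝕜 := ℝ) k).2 (Set.mem_Ici.mpr hq0.le)
        (Set.mem_Ici.mpr zero_le_one) (by linarith : (0:ℝ) ≤ 1 - t) ht0.le (by ring)
      simp only [smul_eq_mul, one_pow, mul_one] at hconv
      rw [hxeq] at hconv
      calc p k * x ^ k ≤ p k * ((1-t) * q ^ k + t) := by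
            exact mul_le_mul_of_nonneg_left hconv (hp k)
        _ = (1-t) * (p k * q ^ k) + t * p k := by ring
    have hsum2 : Summable (fun k => (1-t) * (p k * q ^ k) + t * p k) :=
      ((hsumf q hq0.le hq1.le).mul_left (1-t)).add (hpsum.mul_left t)
    have hle : f x ≤ (1-t) * q + t * (1 - ε) := by
      rw [hf x]
      calc (∑' k, p k * x ^ k) ≤ ∑' k, ((1-t) * (p k * q ^ k) + t * p k) :=
            Summable.tsum_le_tsum hterm (hsumf x (by linarith) hx1) hsum2
        _ = (1-t) * (∑' k, p k * q ^ k) + t * (∑' k, p k) := by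
            rw [Summable.tsum_add ((hsumf q hq0.le hq1.le).mul_left (1-t)) (hpsum.mul_left t),
              tsum_mul_left, tsum_mul_left]
        _ = (1-t) * q + t * (1 - ε) := by
            rw [← hf q, hfix, hsum.tsum_eq]
    calc f x ≤ (1-t) * q + t * (1-ε) := hle
      _ < (1-t) * q + t := by nlinarith
      _ = x := hxeq
  -- limits of b and c
  have hbl : Tendsto b atTop (nhds q) := by
    have hbdd : BddAbove (Set.range b) := ⟨q, by rintro _ ⟨k, rfl⟩; exact (hbc k).2.1⟩
    have h1 : Tendsto b atTop (nhds (⨆ k, b k)) := tendsto_atTop_ciSup hbmono hbdd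
    set L := ⨆ k, b k with hLdef
    have hL0 : 0 ≤ L := ge_of_tendsto h1 (Eventually.of_forall fun k => (hbc k).1)
    have hLq : L ≤ q := le_of_tendsto h1 (Eventually.of_forall fun k => (hbc k).2.1)
    have hcontL : ContinuousAt f L := (hDx L ⟨by linarith, by linarith⟩).continuousAt
    have h2 : Tendsto (fun k => f (b k)) atTop (nhds (f L)) := hcontL.tendsto.comp h1
    have h3 : Tendsto (fun k => b (k+1)) atTop (nhds L) := (tendsto_add_atTop_iff_nat 1).2 h1
    have hfL : f L = L := tendsto_nhds_unique (h2.congr fun k => (hbsucc k).symm) h3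
    have : q ≤ L := hqmin L ⟨hL0, by linarith⟩ hfL
    have : L = q := le_antisymm hLq this
    rwa [this] at h1
  have hcl : Tendsto c atTop (nhds q) := by
    have hbdd : BddBelow (Set.range c) := ⟨q, by rintro _ ⟨k, rfl⟩; exact (hbc k).2.2.1⟩
    have h1 : Tendsto c atTop (nhds (⨅ k, c k)) := tendsto_atTop_ciInf hcanti hbdd
    set L := ⨅ k, c k with hLdef
    have hLq : q ≤ L := ge_of_tendsto h1 (Eventually.of_forall fun k => (hbc k).2.2.1)
    have hLε : L ≤ 1 - ε := by
      refine le_of_tendsto h1 ?_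
      filter_upwards [eventually_ge_atTop 1] with k hk
      calc c k ≤ c 1 := hcanti hk
        _ = 1 - ε := hc1
    have hcontL : ContinuousAt f L := (hDx L ⟨by linarith, by linarith⟩).continuousAt
    have h2 : Tendsto (fun k => f (c k)) atTop (nhds (f L)) := hcontL.tendsto.comp h1
    have h3 : Tendsto (fun k => c (k+1)) atTop (nhds L) := (tendsto_add_atTop_iff_nat 1).2 h1
    have hfL : f L = L := tendsto_nhds_unique (h2.congr fun k => (hcsucc k).symm) h3
    have hLq' : L ≤ q := by
      by_contra hcon
      push_neg at hcon
      exact absurd hfL (ne_of_lt (hfltx L hcon (by linarith)))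
    have : L = q := le_antisymm hLq' hLq
    rwa [this] at h1
  -- slope squeeze via MVT
  have hsqueeze : ∀ k : ℕ, 1 ≤ k →
      D (b k) ≤ (c (k+1) - b (k+1)) / (c k - b k) ∧
      (c (k+1) - b (k+1)) / (c k - b k) ≤ D (c k) := by
    intro k hk
    have hckr : c k ≤ 1 - ε := (hcanti hk).trans_eq hc1
    have hsub : Set.Icc (b k) (c k) ⊆ Set.Ioo (-r) r := by
      intro x hx
      exact ⟨lt_of_lt_of_le (by linarith [(hbc k).1]) hx.1, lt_of_le_of_lt (hx.2.trans hckr) hεr⟩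
    obtain ⟨ξ, hξ, heq⟩ := exists_hasDerivAt_eq_slope f D (hblt k)
      (fun x hx => ((hDx x (hsub hx)).continuousAt).continuousWithinAt)
      (fun x hx => hDx x (hsub (Set.Ioo_subset_Icc_self hx)))
    have heq' : (c (k+1) - b (k+1)) / (c k - b k) = D ξ := by
      rw [heq, hbsucc, hcsucc]
    rw [heq']
    constructor
    · exact hDmono _ _ (hbc k).1 hξ.1.le (hξ.2.le.trans (hckr.trans hεr.le))
    · exact hDmono _ _ ((hbc k).1.trans hξ.1.le) hξ.2.le (hckr.trans hεr.le)
  -- ratio tendsto γ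
  have hρ : Tendsto (fun k => (c (k+1) - b (k+1)) / (c k - b k)) atTop (nhds γ) := by
    rw [hγD]
    apply tendsto_of_tendsto_of_tendsto_of_le_of_le' (hDcont.tendsto.comp hbl)
      (hDcont.tendsto.comp hcl)
    · filter_upwards [eventually_ge_atTop 1] with k hk using (hsqueeze k hk).1
    · filter_upwards [eventually_ge_atTop 1] with k hk using (hsqueeze k hk).2
  have hρinv : Tendsto (fun k => (c k - b k) / (c (k+1) - b (k+1))) atTop (nhds γ⁻¹) := by
    have h := hρ.inv₀ (ne_of_gt hγpos)
    simpa [inv_div] using h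
  -- geometric sums
  have hS : ∀ n : ℕ, Tendsto (fun k => ∑ t ∈ range n, c k ^ t * b k ^ (n-1-t)) atTop
      (nhds ((n:ℝ) * q ^ (n-1))) := by
    intro n
    have h := tendsto_finset_sum (range n)
      (fun t _ => ((hcl.pow t).mul (hbl.pow (n-1-t)) :
        Tendsto (fun k => c k ^ t * b k ^ (n-1-t)) atTop (nhds (q ^ t * q ^ (n-1-t)))))
    have heq : (∑ t ∈ range n, q ^ t * q ^ (n-1-t)) = (n:ℝ) * q ^ (n-1) := by
      have h2 : ∀ t ∈ range n, q ^ t * q ^ (n-1-t) = q ^ (n-1) := by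
        intro t ht
        rw [← pow_add]
        congr 1
        have := mem_range.mp ht
        omega
      rw [Finset.sum_congr rfl h2, Finset.sum_const, card_range, nsmul_eq_mul]
    rwa [heq] at h
  have hden_ne : ((i:ℝ) * q ^ (i-1)) ≠ 0 :=
    ne_of_gt (mul_pos (by exact_mod_cast Nat.lt_of_lt_of_le Nat.zero_lt_one hi) (pow_pos hq0 _))
  have hTi : Tendsto (fun k => ∑ t ∈ range i, c (k+1) ^ t * b (k+1) ^ (i-1-t)) atTop
      (nhds ((i:ℝ) * q ^ (i-1))) := (tendsto_add_atTop_iff_nat 1).2 (hS i)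
  have hmain : Tendsto (fun k => (c k ^ j - b k ^ j) / (c (k+1) ^ i - b (k+1) ^ i)) atTop
      (nhds (γ⁻¹ * (((j:ℝ) * q ^ (j-1)) / ((i:ℝ) * q ^ (i-1))))) := by
    have h := hρinv.mul ((hS j).div hTi hden_ne)
    refine h.congr (fun k => ?_)
    simp only [Pi.div_apply]
    rw [← geom_sum₂_mul (c k) (b k) j, ← geom_sum₂_mul (c (k+1)) (b (k+1)) i]
    rw [div_mul_div_comm]
    ring
  have hval : γ⁻¹ * (((j:ℝ) * q ^ (j-1)) / ((i:ℝ) * q ^ (i-1)))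
      = (j:ℝ) * q ^ ((j:ℤ) - (i:ℤ)) / (γ * i) := by
    have hqj : (q:ℝ)^(j-1) * q = q ^ j := by rw [← pow_succ, Nat.sub_add_cancel hj]
    have hqi : (q:ℝ)^(i-1) * q = q ^ i := by rw [← pow_succ, Nat.sub_add_cancel hi]
    have hz : (q:ℝ) ^ ((j:ℤ) - (i:ℤ)) = q ^ j / q ^ i := by
      rw [zpow_sub₀ (ne_of_gt hq0), zpow_natCast, zpow_natCast]
    have hi0 : ((i:ℝ)) ≠ 0 := by exact_mod_cast Nat.one_le_iff_ne_zero.mp hi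
    rw [hz, ← hqj, ← hqi]
    field_simp
  have hmain2 : Tendsto (fun k : ℕ => (c (k-1) ^ j - b (k-1) ^ j) / (c k ^ i - b k ^ i)) atTop
      (nhds ((j:ℝ) * q ^ ((j:ℤ) - (i:ℤ)) / (γ * i))) := by
    rw [← hval]
    apply (tendsto_add_atTop_iff_nat 1).1
    simp only [Nat.add_sub_cancel]
    exact hmain
  exact ⟨hmain2, hmain2.const_mul _⟩
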